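/- Assume the interaction graph G = (V, I) is acyclic and that {{i_1,i_2},{i_2,i_3},…,{i_m,i_{m+1}}} is a path of length m ≥ 3 in G (all edges in I, vertices i_1,…,i_{m+1} distinct), and fix s ∈ {2,…,m−1}. Then: (a) 2^{d−2}·[Pr(y = +1 | x_{i_s} = +1, x_{i_{s+1}} = +1) − Pr(y = +1 | x_{i_1} = +1, x_{i_{m+1}} = +1)] = Σ_{x : (x_{i_1}, x_{i_s}, x_{i_{s+1}}, x_{i_{m+1}}) = (+1,+1,+1,−1)} ζ_{{i_s,i_{s+1}}}(x) + Σ_{x : (x_{i_1}, x_{i_s}, x_{i_{s+1}}, x_{i_{m+1}}) = (−1,+1,+1,+1)} ζ_{{i_s,i_{s+1}}}(x); and (b) if moreover m is odd, then 2^{d−2}·[Pr(y = +1 | x_{i_s} = +1, x_{i_{s+1}} = +1) − Pr(y = −1 | x_{i_1} = +1, x_{i_{m+1}} = +1)] = Σ_{x : (x_{i_1}, x_{i_s}, x_{i_{s+1}}, x_{i_{m+1}}) = (+1,+1,+1,+1)} ζ_{{i_s,i_{s+1}}}(x) + Σ_{x : (x_{i_1}, x_{i_s}, x_{i_{s+1}},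 x_{i_{m+1}}) = (−1,+1,+1,−1)} ζ_{{i_s,i_{s+1}}}(x). -/

import Mathlib

open Finset

/-- The sigmoid function `σ(t) = eᵗ/(1+eᵗ)`. -/
noncomputable def sigmoid (t : ℝ) : ℝ := Real.exp t / (1 + Real.exp t)

/-- Interpretation of a Boolean as `±1 ∈ ℝ`. -/
def pm (b : Bool) : ℝ := if b then 1 else -1

/-- `Σ_{{i,j}∈E} β_{{i,j}} x_i x_j`, summed over unordered pairs of distinct indices. -/
noncomputable def fld (d : ℕ) (β : Fin d → Fin d → ℝ) (x : Fin d → Bool) : ℝ :=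
  ∑ i : Fin d, ∑ j ∈ Finset.Ioi i, β i j * pm (x i) * pm (x j)

/-- `Pr(y = s·(+1) | x_V ∈ A)`.  Since the covariates are i.i.d. uniform on `{−1,+1}`
and `Pr(y = s | x_V = x) = σ(s · Σ β x_i x_j)`, this conditional probability equals
`(Σ_{x∈A} σ(s · fld x)) / |A|`. -/
noncomputable def condProbY (d : ℕ) (β : Fin d → Fin d → ℝ) (s : ℝ)
    (A : Finset (Fin d → Bool)) : ℝ :=
  (∑ x ∈ A, sigmoid (s * fld d β x)) / A.card

open scoped Classical in
/-- The influence `w_e = |2·Pr(y = +1 | x_i = +1, x_j = +1) − 1|` for `e = {i,j}`. -/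
noncomputable def wgt (d : ℕ) (β : Fin d → Fin d → ℝ) (e : Sym2 (Fin d)) : ℝ :=
  |2 * condProbY d β 1 (Finset.univ.filter (fun x => ∀ v ∈ e, x v = true)) - 1|

/-- The interaction graph `G = (V, I)` with `I = {{i,j} : β_{{i,j}} ≠ 0}`. -/
def interGraph (d : ℕ) (β : Fin d → Fin d → ℝ) : SimpleGraph (Fin d) :=
  SimpleGraph.fromRel (fun i j => β i j ≠ 0)

/-- `S_{{i,j}}(x) = Σ_{{k,l} ∈ E, {k,l} ≠ {i,j}} β_{{k,l}} x_k x_l`. -/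
noncomputable def Sfun (d : ℕ) (β : Fin d → Fin d → ℝ) (i j : Fin d) (x : Fin d → Bool) : ℝ :=
  ∑ k : Fin d, ∑ l ∈ Finset.Ioi k,
    if s(k, l) = s(i, j) then 0 else β k l * pm (x k) * pm (x l)

/-- `ζ_{{i,j}}(x) = σ(β_{{i,j}} + S_{{i,j}}(x)) − σ(−β_{{i,j}} + S_{{i,j}}(x))`. -/
noncomputable def zeta (d : ℕ) (β : Fin d → Fin d → ℝ) (i j : Fin d) (x : Fin d → Bool) : ℝ :=
  sigmoid (β i j + Sfun d β i j x) - sigmoid (-(β i j) + Sfun d β i j x)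

section Aux

variable {d : ℕ}

lemma pm_beq (a b : Bool) : pm (a == b) = pm a * pm b := by
  cases a <;> cases b <;> norm_num [pm]

lemma pm_sq (a : Bool) : pm a * pm a = 1 := by cases a <;> norm_num [pm]

/-- Flip `x` according to `g`: coordinates where `g` is `false` get negated. -/
def flipf (g x : Fin d → Bool) : Fin d → Bool := fun i => x i == g i

@[simp] lemma flipf_flipf (g x : Fin d → Bool) : flipf g (flipf g x) = x := by
  funext i
  simp only [flipf]
  cases x i <;> cases g i <;> rfl

lemma flipf_apply (g x : Fin d → Bool) (i : Fin d) : flipf g x i = (x i == g i) := rfl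

lemma Sfun_flipf_eq (β : Fin d → Fin d → ℝ) (u v : Fin d) (g : Fin d → Bool)
    (hg : ∀ k l, k ≠ l → β k l ≠ 0 → s(k, l) ≠ s(u, v) → g k = g l) (x : Fin d → Bool) :
    Sfun d β u v (flipf g x) = Sfun d β u v x := by
  unfold Sfun
  refine Finset.sum_congr rfl fun i _ => Finset.sum_congr rfl fun j hj => ?_
  by_cases hs : s(i, j) = s(u, v)
  · simp [hs]
  · rw [if_neg hs, if_neg hs]
    by_cases hb : β i j = 0
    · simp [hb]
    · have hij : i ≠ j := LT.lt.ne (Finset.mem_Ioi.mp hj)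
      rw [flipf_apply, flipf_apply, pm_beq, pm_beq, hg i j hij hb hs]
      cases g j <;> cases x i <;> cases x j <;> norm_num [pm]

lemma Sfun_flipf_neg (β : Fin d → Fin d → ℝ) (u v : Fin d) (g : Fin d → Bool)
    (hg : ∀ k l, k ≠ l → β k l ≠ 0 → g k ≠ g l) (x : Fin d → Bool) :
    Sfun d β u v (flipf g x) = -Sfun d β u v x := by
  unfold Sfun
  rw [← Finset.sum_neg_distrib]
  refine Finset.sum_congr rfl fun i _ => ?_
  rw [← Finset.sum_neg_distrib]
  refine Finset.sum_congr rfl fun j hj => ?_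
  by_cases hs : s(i, j) = s(u, v)
  · simp [hs]
  · rw [if_neg hs, if_neg hs]
    by_cases hb : β i j = 0
    · simp [hb]
    · have hij : i ≠ j := LT.lt.ne (Finset.mem_Ioi.mp hj)
      have hgij : g i = !g j := by
        have h2 := hg i j hij hb
        revert h2; cases g i <;> cases g j <;> simp
      rw [flipf_apply, flipf_apply, pm_beq, pm_beq, hgij]
      cases g j <;> cases x i <;> cases x j <;> norm_num [pm]

lemma fld_flipf_neg (β : Fin d → Fin d → ℝ) (g : Fin d → Bool)
    (hg : ∀ k l, k ≠ l → β k l ≠ 0 → g k ≠ g l) (x : Fin d → Bool) :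
    fld d β (flipf g x) = -fld d β x := by
  unfold fld
  rw [← Finset.sum_neg_distrib]
  refine Finset.sum_congr rfl fun i _ => ?_
  rw [← Finset.sum_neg_distrib]
  refine Finset.sum_congr rfl fun j hj => ?_
  by_cases hb : β i j = 0
  · simp [hb]
  · have hij : i ≠ j := LT.lt.ne (Finset.mem_Ioi.mp hj)
    have hgij : g i = !g j := by
      have h2 := hg i j hij hb
      revert h2; cases g i <;> cases g j <;> simp
    rw [flipf_apply, flipf_apply, pm_beq, pm_beq, hgij]
    cases g j <;> cases x i <;> cases x j <;> norm_num [pm]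

lemma fld_flipf_eq (β : Fin d → Fin d → ℝ) (g : Fin d → Bool)
    (hg : ∀ k l, k ≠ l → β k l ≠ 0 → g k = g l) (x : Fin d → Bool) :
    fld d β (flipf g x) = fld d β x := by
  unfold fld
  refine Finset.sum_congr rfl fun i _ => Finset.sum_congr rfl fun j hj => ?_
  by_cases hb : β i j = 0
  · simp [hb]
  · have hij : i ≠ j := LT.lt.ne (Finset.mem_Ioi.mp hj)
    rw [flipf_apply, flipf_apply, pm_beq, pm_beq, hg i j hij hb]
    cases g j <;> cases x i <;> cases x j <;> norm_num [pm]

end Aux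
section Aux2

variable {d : ℕ}

lemma fld_eq_core (β : Fin d → Fin d → ℝ) (u v : Fin d) (huv : u < v) (x : Fin d → Bool) :
    fld d β x = β u v * (pm (x u) * pm (x v)) + Sfun d β u v x := by
  have key : ∀ i : Fin d, ∑ j ∈ Finset.Ioi i,
      (if s(i, j) = s(u, v) then β i j * pm (x i) * pm (x j) else 0)
      = if i = u then β u v * pm (x u) * pm (x v) else 0 := by
    intro i
    by_cases hi : i = u
    · subst hi
      rw [if_pos rfl, Finset.sum_eq_single_of_mem v (Finset.mem_Ioi.mpr huv)]
      · simp
      · intro j hj hjv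
        rw [if_neg]
        intro hs
        rcases Sym2.eq_iff.mp hs with ⟨_, h2⟩ | ⟨h1, h2⟩
        · exact hjv h2
        · exact absurd h1 (LT.lt.ne' huv).symm
    · rw [if_neg hi]
      refine Finset.sum_eq_zero fun j hj => ?_
      rw [if_neg]
      intro hs
      rcases Sym2.eq_iff.mp hs with ⟨h1, _⟩ | ⟨h1, h2⟩
      · exact hi h1
      · subst h1; subst h2
        exact absurd (Finset.mem_Ioi.mp hj) (not_lt.mpr huv.le)
  have step : fld d β x - Sfun d β u v x
      = ∑ i : Fin d, ∑ j ∈ Finset.Ioi i,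
          (if s(i, j) = s(u, v) then β i j * pm (x i) * pm (x j) else 0) := by
    unfold fld Sfun
    rw [← Finset.sum_sub_distrib]
    refine Finset.sum_congr rfl fun i _ => ?_
    rw [← Finset.sum_sub_distrib]
    refine Finset.sum_congr rfl fun j _ => ?_
    by_cases hs : s(i, j) = s(u, v) <;> simp [hs]
  have step2 : fld d β x - Sfun d β u v x = β u v * pm (x u) * pm (x v) := by
    rw [step, Finset.sum_congr rfl fun i _ => key i,
      Finset.sum_ite_eq' Finset.univ u (fun _ => β u v * pm (x u) * pm (x v))]
    simp
  linarith [step2]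

lemma Sfun_symm (β : Fin d → Fin d → ℝ) (u v : Fin d) (x : Fin d → Bool) :
    Sfun d β v u x = Sfun d β u v x := by
  unfold Sfun
  refine Finset.sum_congr rfl fun i _ => Finset.sum_congr rfl fun j _ => ?_
  rw [Sym2.eq_swap (a := v)]

lemma fld_eq (β : Fin d → Fin d → ℝ) (hsymm : ∀ i j, β i j = β j i) (u v : Fin d)
    (huv : u ≠ v) (x : Fin d → Bool) :
    fld d β x = β u v * (pm (x u) * pm (x v)) + Sfun d β u v x := by
  rcases lt_or_gt_of_ne huv with h | h
  · exact fld_eq_core β u v h x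
  · rw [fld_eq_core β v u h x, Sfun_symm, hsymm v u]
    ring

end Aux2
section Aux3

variable {d : ℕ}

open Finset in
lemma sum_flipf (g : Fin d → Bool) (P Q : (Fin d → Bool) → Prop)
    [DecidablePred P] [DecidablePred Q]
    (hPQ : ∀ x, P x → Q (flipf g x)) (hQP : ∀ x, Q x → P (flipf g x))
    (f f' : (Fin d → Bool) → ℝ) (hf : ∀ x, P x → f x = f' (flipf g x)) :
    ∑ x ∈ Finset.univ.filter P, f x = ∑ x ∈ Finset.univ.filter Q, f' x := by
  refine Finset.sum_nbij' (flipf g) (flipf g) ?_ ?_ ?_ ?_ ?_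
  · intro a ha
    simp only [Finset.mem_filter, Finset.mem_univ, true_and] at ha ⊢
    exact hPQ a ha
  · intro a ha
    simp only [Finset.mem_filter, Finset.mem_univ, true_and] at ha ⊢
    exact hQP a ha
  · intro a _; exact flipf_flipf g a
  · intro a _; exact flipf_flipf g a
  · intro a ha
    simp only [Finset.mem_filter, Finset.mem_univ, true_and] at ha
    exact hf a ha

open Finset in
lemma card_flipf (g : Fin d → Bool) (P Q : (Fin d → Bool) → Prop)
    [DecidablePred P] [DecidablePred Q]
    (hPQ : ∀ x, P x → Q (flipf g x)) (hQP : ∀ x, Q x → P (flipf g x)) :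
    (Finset.univ.filter P).card = (Finset.univ.filter Q).card := by
  refine Finset.card_bij' (fun x _ => flipf g x) (fun x _ => flipf g x) ?_ ?_ ?_ ?_
  · intro a ha
    simp only [Finset.mem_filter, Finset.mem_univ, true_and] at ha ⊢
    exact hPQ a ha
  · intro a ha
    simp only [Finset.mem_filter, Finset.mem_univ, true_and] at ha ⊢
    exact hQP a ha
  · intro a _; exact flipf_flipf g a
  · intro a _; exact flipf_flipf g a

open Finset in
lemma sum_split (P : (Fin d → Bool) → Prop) [DecidablePred P] (w : Fin d)
    (f : (Fin d → Bool) → ℝ) :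
    ∑ x ∈ Finset.univ.filter P, f x
      = (∑ x ∈ Finset.univ.filter (fun x => P x ∧ x w = true), f x)
        + ∑ x ∈ Finset.univ.filter (fun x => P x ∧ x w = false), f x := by
  rw [← Finset.sum_filter_add_sum_filter_not (Finset.univ.filter P) (fun x => x w = true) f,
    Finset.filter_filter, Finset.filter_filter]
  congr 2
  refine Finset.filter_congr fun x _ => ?_
  simp [Bool.not_eq_true]

open Finset in
lemma card_split (P : (Fin d → Bool) → Prop) [DecidablePred P] (w : Fin d) :
    (Finset.univ.filter P).card
      = (Finset.univ.filter (fun x => P x ∧ x w = true)).card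
        + (Finset.univ.filter (fun x => P x ∧ x w = false)).card := by
  rw [← Finset.card_filter_add_card_filter_not (s := Finset.univ.filter P)
    (p := fun x => x w = true), Finset.filter_filter, Finset.filter_filter]
  congr 2
  refine Finset.filter_congr fun x _ => ?_
  simp [Bool.not_eq_true]

/-- Every acyclic graph on a fintype admits a proper 2-coloring. -/
lemma exists_coloring {V : Type*} [Fintype V] :
    ∀ (n : ℕ) (G : SimpleGraph V), G.edgeSet.ncard ≤ n → G.IsAcyclic →
      ∃ c : V → Bool, ∀ a b, G.Adj a b → c a ≠ c b := by
  classical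
  intro n
  induction n with
  | zero =>
    intro G hn _
    have h0 : G.edgeSet = ∅ := by
      rw [← Set.ncard_eq_zero (Set.toFinite _)]
      omega
    exact ⟨fun _ => true, fun a b hab => absurd (G.mem_edgeSet.mpr hab) (by simp [h0])⟩
  | succ n ih =>
    intro G hn hacyc
    by_cases hE : G.edgeSet = ∅
    · exact ⟨fun _ => true, fun a b hab => absurd (G.mem_edgeSet.mpr hab) (by simp [hE])⟩
    · obtain ⟨e, he⟩ := Set.nonempty_iff_ne_empty.mpr hE
      induction e using Sym2.ind with
      | _ a b =>
      have hab : G.Adj a b := G.mem_edgeSet.mp he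
      set G' : SimpleGraph V := G \ SimpleGraph.fromEdgeSet {s(a, b)} with hG'
      have hle : G' ≤ G := sdiff_le
      have hacyc' : G'.IsAcyclic := by
        intro v c hc
        exact hacyc (c.mapLe hle) (hc.mapLe hle)
      have hedge' : G'.edgeSet = G.edgeSet \ {s(a, b)} := by
        rw [hG', SimpleGraph.edgeSet_sdiff, SimpleGraph.edgeSet_fromEdgeSet,
          Set.diff_diff_right]
        have : G.edgeSet ∩ {e : Sym2 V | e.IsDiag} = ∅ := by
          ext e
          simp only [Set.mem_inter_iff, Set.mem_setOf_eq, Set.mem_empty_iff_false, iff_false]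
          rintro ⟨he1, he2⟩
          exact (SimpleGraph.not_isDiag_of_mem_edgeSet G he1) he2
        rw [show G.edgeSet ∩ Sym2.diagSet = ∅ from this, Set.union_empty]
      have hcard : G'.edgeSet.ncard ≤ n := by
        rw [hedge', Set.ncard_diff_singleton_of_mem he]
        have : 1 ≤ G.edgeSet.ncard := by
          rw [Nat.one_le_iff_ne_zero, Ne, Set.ncard_eq_zero (Set.toFinite _)]
          exact hE
        omega
      obtain ⟨c', hc'⟩ := ih G' hcard hacyc'
      have hbridge : ¬ G'.Reachable a b := by
        have := (SimpleGraph.isAcyclic_iff_forall_adj_isBridge.mp hacyc) hab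
        exact SimpleGraph.isBridge_iff.mp this
      have hedge_ne : ∀ x y, G.Adj x y → s(x, y) ≠ s(a, b) → G'.Adj x y := by
        intro x y hxy hne
        rw [hG', SimpleGraph.sdiff_adj]
        refine ⟨hxy, ?_⟩
        rw [SimpleGraph.fromEdgeSet_adj]
        rintro ⟨h1, -⟩
        exact hne h1
      by_cases hcab : c' a = c' b
      · refine ⟨fun x => if G'.Reachable b x then !(c' x) else c' x, ?_⟩
        intro x y hxy
        dsimp only
        by_cases hxye : s(x, y) = s(a, b)
        · rcases Sym2.eq_iff.mp hxye with ⟨h1, h2⟩ | ⟨h1, h2⟩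
          · subst h1; subst h2
            rw [if_neg (fun h => hbridge h.symm), if_pos (SimpleGraph.Reachable.refl _), hcab]
            simp
          · subst h1; subst h2
            rw [if_pos (SimpleGraph.Reachable.refl _), if_neg (fun h => hbridge h.symm), hcab]
            simp
        · have hxy' : G'.Adj x y := hedge_ne x y hxy hxye
          have hiff : G'.Reachable b x ↔ G'.Reachable b y :=
            ⟨fun h => h.trans hxy'.reachable, fun h => h.trans hxy'.symm.reachable⟩
          have hne := hc' x y hxy'
          by_cases hbx : G'.Reachable b x
          · rw [if_pos hbx, if_pos (hiff.mp hbx)]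
            simpa using hne
          · rw [if_neg hbx, if_neg (fun h => hbx (hiff.mpr h))]
            exact hne
      · refine ⟨c', ?_⟩
        intro x y hxy
        by_cases hxye : s(x, y) = s(a, b)
        · rcases Sym2.eq_iff.mp hxye with ⟨h1, h2⟩ | ⟨h1, h2⟩
          · subst h1; subst h2; exact hcab
          · subst h1; subst h2; exact fun h => hcab h.symm
        · exact hc' x y (hedge_ne x y hxy hxye)

end Aux3
section Aux4

variable {d : ℕ}

open Finset in
lemma card_pair_filter (u v : Fin d) (huv : u ≠ v) (hd : 2 ≤ d) (a b : Bool) :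
    (Finset.univ.filter (fun x : Fin d → Bool => x u = a ∧ x v = b)).card = 2 ^ (d - 2) := by
  classical
  have hclass : ∀ a b : Bool,
      (Finset.univ.filter (fun x : Fin d → Bool => x u = a ∧ x v = b)).card
        = (Finset.univ.filter (fun x : Fin d → Bool => x u = true ∧ x v = true)).card := by
    intro a' b'
    refine card_flipf (fun i => if i = u then a' else if i = v then b' else true) _ _ ?_ ?_
    · rintro x ⟨hx1, hx2⟩
      refine ⟨?_, ?_⟩
      · rw [flipf_apply, if_pos rfl, hx1]; simp
      · rw [flipf_apply, if_neg huv.symm, if_pos rfl, hx2]; simp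
    · rintro x ⟨hx1, hx2⟩
      refine ⟨?_, ?_⟩
      · rw [flipf_apply, if_pos rfl, hx1]; simp
      · rw [flipf_apply, if_neg huv.symm, if_pos rfl, hx2]; simp
  have huniv : (Finset.univ : Finset (Fin d → Bool)).card = 2 ^ d := by
    rw [Finset.card_univ, Fintype.card_fun]
    simp
  have hsplitu : (Finset.univ.filter (fun x : Fin d → Bool => x u = true)).card
      + (Finset.univ.filter (fun x : Fin d → Bool => x u = false)).card = 2 ^ d := by
    have h := Finset.card_filter_add_card_filter_not
      (s := (Finset.univ : Finset (Fin d → Bool))) (p := fun x : Fin d → Bool => x u = true)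
    rw [huniv] at h
    rw [← h]
    congr 1
    apply congrArg
    refine Finset.filter_congr fun x _ => ?_
    simp [Bool.not_eq_true]
  have e1 : (Finset.univ.filter (fun x : Fin d → Bool => x u = true)).card
      = (Finset.univ.filter (fun x : Fin d → Bool => x u = true ∧ x v = true)).card
        + (Finset.univ.filter (fun x : Fin d → Bool => x u = true ∧ x v = false)).card :=
    card_split (fun x : Fin d → Bool => x u = true) v
  have e2 : (Finset.univ.filter (fun x : Fin d → Bool => x u = false)).card
      = (Finset.univ.filter (fun x : Fin d → Bool => x u = false ∧ x v = true)).card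
        + (Finset.univ.filter (fun x : Fin d → Bool => x u = false ∧ x v = false)).card :=
    card_split (fun x : Fin d → Bool => x u = false) v
  have c1 := hclass true true
  have c2 := hclass true false
  have c3 := hclass false true
  have c4 := hclass false false
  have hfin := hclass a b
  have hpow : 2 ^ d = 2 ^ (d - 2) * 4 := by
    have h2 : d - 2 + 2 = d := Nat.sub_add_cancel hd
    calc 2 ^ d = 2 ^ (d - 2 + 2) := by rw [h2]
    _ = 2 ^ (d - 2) * 4 := by rw [pow_add]; norm_num
  linarith [hsplitu, e1, e2, c1, c2, c3, c4, hfin, hpow]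

end Aux4
section Aux5

variable {d : ℕ}

/-- The basic building block: sum of `σ(r + S(x))` over a sign class. -/
noncomputable def Usum (d : ℕ) (β : Fin d → Fin d → ℝ) (z u v w : Fin d) (r : ℝ)
    (a b c e : Bool) : ℝ :=
  ∑ x ∈ Finset.univ.filter (fun x : Fin d → Bool =>
      x z = a ∧ x u = b ∧ x v = c ∧ x w = e),
    sigmoid (r + Sfun d β u v x)

lemma beq_right_cancel' (a b : Bool) : ((a == b) == b) = a := by cases a <;> cases b <;> rfl

lemma beq_true' (a : Bool) : (a == true) = a := by cases a <;> rfl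

lemma beq_false' (a : Bool) : (a == false) = !a := by cases a <;> rfl

lemma Usum_flip (β : Fin d → Fin d → ℝ) (z u v w : Fin d) (g : Fin d → Bool)
    (hg : ∀ k l, k ≠ l → β k l ≠ 0 → s(k, l) ≠ s(u, v) → g k = g l)
    (r : ℝ) (a b c e : Bool) :
    Usum d β z u v w r a b c e
      = Usum d β z u v w r (a == g z) (b == g u) (c == g v) (e == g w) := by
  classical
  unfold Usum
  refine sum_flipf g _ _ ?_ ?_ _ _ ?_
  · rintro x ⟨h1, h2, h3, h4⟩
    exact ⟨by rw [flipf_apply, h1], by rw [flipf_apply, h2], by rw [flipf_apply, h3],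
      by rw [flipf_apply, h4]⟩
  · rintro x ⟨h1, h2, h3, h4⟩
    exact ⟨by rw [flipf_apply, h1, beq_right_cancel'],
      by rw [flipf_apply, h2, beq_right_cancel'],
      by rw [flipf_apply, h3, beq_right_cancel'],
      by rw [flipf_apply, h4, beq_right_cancel']⟩
  · intro x _
    rw [Sfun_flipf_eq β u v g hg]

lemma sum_pair_splitA (z u v w : Fin d) (f : (Fin d → Bool) → ℝ) :
    ∑ x ∈ Finset.univ.filter (fun x : Fin d → Bool => x u = true ∧ x v = true), f x
      = (∑ x ∈ Finset.univ.filter (fun x : Fin d → Bool =>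
            x z = true ∧ x u = true ∧ x v = true ∧ x w = true), f x)
        + (∑ x ∈ Finset.univ.filter (fun x : Fin d → Bool =>
            x z = true ∧ x u = true ∧ x v = true ∧ x w = false), f x)
        + (∑ x ∈ Finset.univ.filter (fun x : Fin d → Bool =>
            x z = false ∧ x u = true ∧ x v = true ∧ x w = true), f x)
        + (∑ x ∈ Finset.univ.filter (fun x : Fin d → Bool =>
            x z = false ∧ x u = true ∧ x v = true ∧ x w = false), f x) := by
  classical
  rw [sum_split (fun x : Fin d → Bool => x u = true ∧ x v = true) z f]
  rw [sum_split (fun x : Fin d → Bool => (x u = true ∧ x v = true) ∧ x z = true) w f]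
  rw [sum_split (fun x : Fin d → Bool => (x u = true ∧ x v = true) ∧ x z = false) w f]
  have e1 : Finset.univ.filter
        (fun x : Fin d → Bool => ((x u = true ∧ x v = true) ∧ x z = true) ∧ x w = true)
      = Finset.univ.filter
        (fun x : Fin d → Bool => x z = true ∧ x u = true ∧ x v = true ∧ x w = true) :=
    Finset.filter_congr fun x _ => by tauto
  have e2 : Finset.univ.filter
        (fun x : Fin d → Bool => ((x u = true ∧ x v = true) ∧ x z = true) ∧ x w = false)
      = Finset.univ.filter
        (fun x : Fin d → Bool => x z = true ∧ x u = true ∧ x v = true ∧ x w = false) :=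
    Finset.filter_congr fun x _ => by tauto
  have e3 : Finset.univ.filter
        (fun x : Fin d → Bool => ((x u = true ∧ x v = true) ∧ x z = false) ∧ x w = true)
      = Finset.univ.filter
        (fun x : Fin d → Bool => x z = false ∧ x u = true ∧ x v = true ∧ x w = true) :=
    Finset.filter_congr fun x _ => by tauto
  have e4 : Finset.univ.filter
        (fun x : Fin d → Bool => ((x u = true ∧ x v = true) ∧ x z = false) ∧ x w = false)
      = Finset.univ.filter
        (fun x : Fin d → Bool => x z = false ∧ x u = true ∧ x v = true ∧ x w = false) :=
    Finset.filter_congr fun x _ => by tauto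
  rw [e1, e2, e3, e4]
  ring

lemma sum_pair_splitB (z u v w : Fin d) (a e : Bool) (f : (Fin d → Bool) → ℝ) :
    ∑ x ∈ Finset.univ.filter (fun x : Fin d → Bool => x z = a ∧ x w = e), f x
      = (∑ x ∈ Finset.univ.filter (fun x : Fin d → Bool =>
            x z = a ∧ x u = true ∧ x v = true ∧ x w = e), f x)
        + (∑ x ∈ Finset.univ.filter (fun x : Fin d → Bool =>
            x z = a ∧ x u = true ∧ x v = false ∧ x w = e), f x)
        + (∑ x ∈ Finset.univ.filter (fun x : Fin d → Bool =>
            x z = a ∧ x u = false ∧ x v = true ∧ x w = e), f x)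
        + (∑ x ∈ Finset.univ.filter (fun x : Fin d → Bool =>
            x z = a ∧ x u = false ∧ x v = false ∧ x w = e), f x) := by
  classical
  rw [sum_split (fun x : Fin d → Bool => x z = a ∧ x w = e) u f]
  rw [sum_split (fun x : Fin d → Bool => (x z = a ∧ x w = e) ∧ x u = true) v f]
  rw [sum_split (fun x : Fin d → Bool => (x z = a ∧ x w = e) ∧ x u = false) v f]
  have e1 : Finset.univ.filter
        (fun x : Fin d → Bool => ((x z = a ∧ x w = e) ∧ x u = true) ∧ x v = true)
      = Finset.univ.filter
        (fun x : Fin d → Bool => x z = a ∧ x u = true ∧ x v = true ∧ x w = e) :=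
    Finset.filter_congr fun x _ => by tauto
  have e2 : Finset.univ.filter
        (fun x : Fin d → Bool => ((x z = a ∧ x w = e) ∧ x u = true) ∧ x v = false)
      = Finset.univ.filter
        (fun x : Fin d → Bool => x z = a ∧ x u = true ∧ x v = false ∧ x w = e) :=
    Finset.filter_congr fun x _ => by tauto
  have e3 : Finset.univ.filter
        (fun x : Fin d → Bool => ((x z = a ∧ x w = e) ∧ x u = false) ∧ x v = true)
      = Finset.univ.filter
        (fun x : Fin d → Bool => x z = a ∧ x u = false ∧ x v = true ∧ x w = e) :=
    Finset.filter_congr fun x _ => by tauto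
  have e4 : Finset.univ.filter
        (fun x : Fin d → Bool => ((x z = a ∧ x w = e) ∧ x u = false) ∧ x v = false)
      = Finset.univ.filter
        (fun x : Fin d → Bool => x z = a ∧ x u = false ∧ x v = false ∧ x w = e) :=
    Finset.filter_congr fun x _ => by tauto
  rw [e1, e2, e3, e4]
  ring

lemma sum_quad_sigmoid (β : Fin d → Fin d → ℝ) (hsymm : ∀ i j, β i j = β j i)
    (z u v w : Fin d) (huv : u ≠ v) (a b c e : Bool) :
    ∑ x ∈ Finset.univ.filter (fun x : Fin d → Bool =>
        x z = a ∧ x u = b ∧ x v = c ∧ x w = e),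
      sigmoid (1 * fld d β x)
      = Usum d β z u v w (β u v * (pm b * pm c)) a b c e := by
  unfold Usum
  refine Finset.sum_congr rfl fun x hx => ?_
  simp only [Finset.mem_filter] at hx
  obtain ⟨-, -, h2, h3, -⟩ := hx
  rw [one_mul, fld_eq β hsymm u v huv x, h2, h3]

end Aux5

/-- Lemma 5: let the interaction graph be acyclic, let
`{i_1,i_2},…,{i_m,i_{m+1}}` be a path of length `m ≥ 3` in it (the vertices
`i_1,…,i_{m+1}` are `p 0, …, p m`), and let `s ∈ {2,…,m−1}` index an interior edge
`{i_s, i_{s+1}}` (in `0`-based form, the edge `{p k, p (k+1)}` with `1 ≤ k ≤ m−2`).  Then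
(a) `2^{d−2}·[Pr(y=+1|x_{i_s}=+1,x_{i_{s+1}}=+1) − Pr(y=+1|x_{i_1}=+1,x_{i_{m+1}}=+1)]`
equals the sum of `ζ_{{i_s,i_{s+1}}}(x)` over `x` with
`(x_{i_1},x_{i_s},x_{i_{s+1}},x_{i_{m+1}}) = (+1,+1,+1,−1)` plus the sum over
`(−1,+1,+1,+1)`; and (b) if `m` is odd,
`2^{d−2}·[Pr(y=+1|x_{i_s}=+1,x_{i_{s+1}}=+1) − Pr(y=−1|x_{i_1}=+1,x_{i_{m+1}}=+1)]`
equals the sum over `(+1,+1,+1,+1)` plus the sum over `(−1,+1,+1,−1)`. -/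
theorem statement18 (d m : ℕ) (hd : 2 ≤ d) (hm : 3 ≤ m) (β : Fin d → Fin d → ℝ)
    (hsymm : ∀ i j, β i j = β j i)
    (hacyc : (interGraph d β).IsAcyclic)
    (p : Fin (m + 1) → Fin d) (hinj : Function.Injective p)
    (hedge : ∀ k : Fin m, β (p k.castSucc) (p k.succ) ≠ 0)
    (k : Fin m) (hk₁ : 1 ≤ (k : ℕ)) (hk₂ : (k : ℕ) + 1 < m) :
    ((2 : ℝ) ^ ((d : ℤ) - 2) *
        (condProbY d β 1
            (Finset.univ.filter (fun x => x (p k.castSucc) = true ∧ x (p k.succ) = true)) -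
          condProbY d β 1
            (Finset.univ.filter (fun x => x (p 0) = true ∧ x (p (Fin.last m)) = true))) =
      (∑ x ∈ Finset.univ.filter (fun x : Fin d → Bool =>
          x (p 0) = true ∧ x (p k.castSucc) = true ∧ x (p k.succ) = true ∧
            x (p (Fin.last m)) = false),
          zeta d β (p k.castSucc) (p k.succ) x) +
      (∑ x ∈ Finset.univ.filter (fun x : Fin d → Bool =>
          x (p 0) = false ∧ x (p k.castSucc) = true ∧ x (p k.succ) = true ∧
            x (p (Fin.last m)) = true),
          zeta d β (p k.castSucc) (p k.succ) x)) ∧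
    (Odd m →
      (2 : ℝ) ^ ((d : ℤ) - 2) *
          (condProbY d β 1
              (Finset.univ.filter (fun x => x (p k.castSucc) = true ∧ x (p k.succ) = true)) -
            condProbY d β (-1)
              (Finset.univ.filter (fun x => x (p 0) = true ∧ x (p (Fin.last m)) = true))) =
        (∑ x ∈ Finset.univ.filter (fun x : Fin d → Bool =>
            x (p 0) = true ∧ x (p k.castSucc) = true ∧ x (p k.succ) = true ∧
              x (p (Fin.last m)) = true),
            zeta d β (p k.castSucc) (p k.succ) x) +
        (∑ x ∈ Finset.univ.filter (fun x : Fin d → Bool =>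
            x (p 0) = false ∧ x (p k.castSucc) = true ∧ x (p k.succ) = true ∧
              x (p (Fin.last m)) = false),
            zeta d β (p k.castSucc) (p k.succ) x)) := by
  classical
  -- distinctness of the four path vertices
  have hpne : ∀ s t : Fin (m + 1), (s : ℕ) ≠ (t : ℕ) → p s ≠ p t := by
    intro s t h hh
    exact h (congrArg Fin.val (hinj hh))
  have hzu : p 0 ≠ p k.castSucc := hpne _ _ (by
    simp only [Fin.val_zero, Fin.coe_castSucc]; omega)
  have hzv : p 0 ≠ p k.succ := hpne _ _ (by
    simp only [Fin.val_zero, Fin.val_succ]; omega)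
  have hzw : p 0 ≠ p (Fin.last m) := hpne _ _ (by
    simp only [Fin.val_zero, Fin.val_last]; omega)
  have huv : p k.castSucc ≠ p k.succ := hpne _ _ (by
    simp only [Fin.coe_castSucc, Fin.val_succ]; omega)
  have huw : p k.castSucc ≠ p (Fin.last m) := hpne _ _ (by
    simp only [Fin.coe_castSucc, Fin.val_last]; omega)
  have hvw : p k.succ ≠ p (Fin.last m) := hpne _ _ (by
    simp only [Fin.val_succ, Fin.val_last]; omega)
  -- adjacency facts
  have hGadjβ : ∀ a b : Fin d, a ≠ b → β a b ≠ 0 → (interGraph d β).Adj a b := by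
    intro a b h hb
    rw [interGraph, SimpleGraph.fromRel_adj]
    exact ⟨h, Or.inl hb⟩
  have hGpadj : ∀ j : Fin m, (interGraph d β).Adj (p j.castSucc) (p j.succ) := by
    intro j
    exact hGadjβ _ _ (hpne _ _ (by simp only [Fin.coe_castSucc, Fin.val_succ]; omega)) (hedge j)
  set G' : SimpleGraph (Fin d) :=
    (interGraph d β) \ SimpleGraph.fromEdgeSet {s(p k.castSucc, p k.succ)} with hG'def
  have hbridge : ¬ G'.Reachable (p k.castSucc) (p k.succ) := by
    have hb := (SimpleGraph.isAcyclic_iff_forall_adj_isBridge.mp hacyc) (hGpadj k)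
    exact SimpleGraph.isBridge_iff.mp hb
  have hG'of : ∀ a b : Fin d, a ≠ b → β a b ≠ 0 →
      s(a, b) ≠ s(p k.castSucc, p k.succ) → G'.Adj a b := by
    intro a b h hb hs
    rw [hG'def, SimpleGraph.sdiff_adj]
    refine ⟨hGadjβ a b h hb, ?_⟩
    rw [SimpleGraph.fromEdgeSet_adj]
    rintro ⟨h1, -⟩
    exact hs (Set.mem_singleton_iff.mp h1)
  have hG'padj : ∀ j : Fin m, j ≠ k → G'.Adj (p j.castSucc) (p j.succ) := by
    intro j hjk
    refine hG'of _ _ (hpne _ _ (by simp only [Fin.coe_castSucc, Fin.val_succ]; omega)) (hedge j) ?_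
    intro h
    rcases Sym2.eq_iff.mp h with ⟨h1, h2⟩ | ⟨h1, h2⟩
    · exact hjk (Fin.castSucc_injective m (hinj h1))
    · have e1 := congrArg Fin.val (hinj h1)
      have e2 := congrArg Fin.val (hinj h2)
      simp at e1 e2
      omega
  -- reachability along the path
  have hreachV : ∀ j : ℕ, (k : ℕ) + 1 ≤ j → ∀ hj : j < m + 1,
      G'.Reachable (p k.succ) (p ⟨j, hj⟩) := by
    intro j hj1
    induction j, hj1 using Nat.le_induction with
    | base =>
      intro hj
      have he : (⟨(k : ℕ) + 1, hj⟩ : Fin (m + 1)) = k.succ := by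
        apply Fin.ext; simp
      rw [he]
    | succ j hj ih =>
      intro hj2
      have hjm : j < m := by omega
      have h1 : (⟨j, by omega⟩ : Fin (m + 1)) = (⟨j, hjm⟩ : Fin m).castSucc := by
        apply Fin.ext; simp
      have h2 : (⟨j + 1, hj2⟩ : Fin (m + 1)) = (⟨j, hjm⟩ : Fin m).succ := by
        apply Fin.ext; simp
      have hadj := hG'padj ⟨j, hjm⟩ (by
        intro h
        have := congrArg Fin.val h
        simp at this
        omega)
      rw [← h1, ← h2] at hadj
      exact (ih (by omega)).trans hadj.reachable
  have hreachU : ∀ j : ℕ, j ≤ (k : ℕ) →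
      G'.Reachable (p k.castSucc) (p ⟨(k : ℕ) - j, by omega⟩) := by
    intro j
    induction j with
    | zero =>
      intro _
      have he : (⟨(k : ℕ) - 0, by omega⟩ : Fin (m + 1)) = k.castSucc := by
        apply Fin.ext; simp
      rw [he]
    | succ j ih =>
      intro hjk
      have ihr := ih (by omega)
      have hjm : (k : ℕ) - (j + 1) < m := by omega
      have hadj := hG'padj ⟨(k : ℕ) - (j + 1), hjm⟩ (by
        intro h
        have := congrArg Fin.val h
        simp at this
        omega)
      have h1 : (⟨(k : ℕ) - (j + 1), hjm⟩ : Fin m).castSucc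
          = (⟨(k : ℕ) - (j + 1), by omega⟩ : Fin (m + 1)) := by
        apply Fin.ext; simp
      have h2 : (⟨(k : ℕ) - (j + 1), hjm⟩ : Fin m).succ
          = (⟨(k : ℕ) - j, by omega⟩ : Fin (m + 1)) := by
        apply Fin.ext; simp; omega
      rw [h1, h2] at hadj
      exact ihr.trans hadj.symm.reachable
  have hCw : G'.Reachable (p k.succ) (p (Fin.last m)) := by
    have h := hreachV m (by omega) (by omega)
    have he : (⟨m, by omega⟩ : Fin (m + 1)) = Fin.last m := by apply Fin.ext; simp
    rwa [he] at h
  have hDz : G'.Reachable (p k.castSucc) (p 0) := by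
    have h := hreachU (k : ℕ) le_rfl
    have he : (⟨(k : ℕ) - (k : ℕ), by omega⟩ : Fin (m + 1)) = 0 := by
      apply Fin.ext; simp
    rwa [he] at h
  have hCz : ¬ G'.Reachable (p k.succ) (p 0) := by
    intro h
    exact hbridge (hDz.trans h.symm)
  have hDw : ¬ G'.Reachable (p k.castSucc) (p (Fin.last m)) := by
    intro h
    exact hbridge (h.trans hCw.symm)
  -- the component flips
  set gC : Fin d → Bool := fun i => if G'.Reachable (p k.succ) i then false else true
    with hgCdef
  set gD : Fin d → Bool := fun i => if G'.Reachable (p k.castSucc) i then false else true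
    with hgDdef
  have hgC : ∀ a b : Fin d, a ≠ b → β a b ≠ 0 →
      s(a, b) ≠ s(p k.castSucc, p k.succ) → gC a = gC b := by
    intro a b h hb hs
    have hadj := hG'of a b h hb hs
    simp only [hgCdef]
    by_cases hr : G'.Reachable (p k.succ) a
    · rw [if_pos hr, if_pos (hr.trans hadj.reachable)]
    · rw [if_neg hr, if_neg (fun hh => hr (hh.trans hadj.symm.reachable))]
  have hgD : ∀ a b : Fin d, a ≠ b → β a b ≠ 0 →
      s(a, b) ≠ s(p k.castSucc, p k.succ) → gD a = gD b := by
    intro a b h hb hs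
    have hadj := hG'of a b h hb hs
    simp only [hgDdef]
    by_cases hr : G'.Reachable (p k.castSucc) a
    · rw [if_pos hr, if_pos (hr.trans hadj.reachable)]
    · rw [if_neg hr, if_neg (fun hh => hr (hh.trans hadj.symm.reachable))]
  have hgCz : gC (p 0) = true := by simp only [hgCdef]; rw [if_neg hCz]
  have hgCu : gC (p k.castSucc) = true := by
    simp only [hgCdef]; rw [if_neg (fun h => hbridge h.symm)]
  have hgCv : gC (p k.succ) = false := by
    simp only [hgCdef]; rw [if_pos (SimpleGraph.Reachable.refl _)]
  have hgCw : gC (p (Fin.last m)) = false := by simp only [hgCdef]; rw [if_pos hCw]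
  have hgDz : gD (p 0) = false := by simp only [hgDdef]; rw [if_pos hDz]
  have hgDu : gD (p k.castSucc) = false := by
    simp only [hgDdef]; rw [if_pos (SimpleGraph.Reachable.refl _)]
  have hgDv : gD (p k.succ) = true := by simp only [hgDdef]; rw [if_neg hbridge]
  have hgDw : gD (p (Fin.last m)) = true := by simp only [hgDdef]; rw [if_neg hDw]
  -- main flip identities for the class sums
  have RC : ∀ (r : ℝ) (a b c e : Bool),
      Usum d β (p 0) (p k.castSucc) (p k.succ) (p (Fin.last m)) r a b c e
        = Usum d β (p 0) (p k.castSucc) (p k.succ) (p (Fin.last m)) r a b (!c) (!e) := by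
    intro r a b c e
    have h := Usum_flip β (p 0) (p k.castSucc) (p k.succ) (p (Fin.last m)) gC hgC r a b c e
    rwa [hgCz, hgCu, hgCv, hgCw, beq_true', beq_true', beq_false', beq_false'] at h
  have RD : ∀ (r : ℝ) (a b c e : Bool),
      Usum d β (p 0) (p k.castSucc) (p k.succ) (p (Fin.last m)) r a b c e
        = Usum d β (p 0) (p k.castSucc) (p k.succ) (p (Fin.last m)) r (!a) (!b) c e := by
    intro r a b c e
    have h := Usum_flip β (p 0) (p k.castSucc) (p k.succ) (p (Fin.last m)) gD hgD r a b c e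
    rwa [hgDz, hgDu, hgDv, hgDw, beq_true', beq_true', beq_false', beq_false'] at h
  have hcne : ((2 : ℝ) ^ (d - 2 : ℕ)) ≠ 0 := by positivity
  have hz2 : ((2 : ℝ) ^ ((d : ℤ) - 2)) = (2 : ℝ) ^ (d - 2 : ℕ) := by
    rw [← zpow_natCast]
    congr 1
    omega
  -- cardinalities
  have hcardA : (Finset.univ.filter (fun x : Fin d → Bool =>
      x (p k.castSucc) = true ∧ x (p k.succ) = true)).card = 2 ^ (d - 2) :=
    card_pair_filter _ _ huv hd true true
  have hcardB : (Finset.univ.filter (fun x : Fin d → Bool =>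
      x (p 0) = true ∧ x (p (Fin.last m)) = true)).card = 2 ^ (d - 2) :=
    card_pair_filter _ _ hzw hd true true
  -- the sigmoid-argument constants
  have hr1 : (β (p k.castSucc) (p k.succ)) * (pm true * pm true) = (β (p k.castSucc) (p k.succ)) := by norm_num [pm]
  have hr2 : (β (p k.castSucc) (p k.succ)) * (pm true * pm false) = -(β (p k.castSucc) (p k.succ)) := by norm_num [pm]
  have hr3 : (β (p k.castSucc) (p k.succ)) * (pm false * pm true) = -(β (p k.castSucc) (p k.succ)) := by norm_num [pm]
  have hr4 : (β (p k.castSucc) (p k.succ)) * (pm false * pm false) = (β (p k.castSucc) (p k.succ)) := by norm_num [pm]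
  -- sum over the A-class
  have SA : (∑ x ∈ Finset.univ.filter (fun x : Fin d → Bool =>
        x (p k.castSucc) = true ∧ x (p k.succ) = true), sigmoid (1 * fld d β x))
      = Usum d β (p 0) (p k.castSucc) (p k.succ) (p (Fin.last m)) (β (p k.castSucc) (p k.succ)) true true true true + Usum d β (p 0) (p k.castSucc) (p k.succ) (p (Fin.last m)) (β (p k.castSucc) (p k.succ)) true true true false
        + Usum d β (p 0) (p k.castSucc) (p k.succ) (p (Fin.last m)) (β (p k.castSucc) (p k.succ)) false true true true + Usum d β (p 0) (p k.castSucc) (p k.succ) (p (Fin.last m)) (β (p k.castSucc) (p k.succ)) false true true false := by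
    rw [sum_pair_splitA (p 0) (p k.castSucc) (p k.succ) (p (Fin.last m))]
    rw [sum_quad_sigmoid β hsymm _ _ _ _ huv true true true true,
      sum_quad_sigmoid β hsymm _ _ _ _ huv true true true false,
      sum_quad_sigmoid β hsymm _ _ _ _ huv false true true true,
      sum_quad_sigmoid β hsymm _ _ _ _ huv false true true false, hr1]
  -- sum over the B-class
  have SB : (∑ x ∈ Finset.univ.filter (fun x : Fin d → Bool =>
        x (p 0) = true ∧ x (p (Fin.last m)) = true), sigmoid (1 * fld d β x))
      = Usum d β (p 0) (p k.castSucc) (p k.succ) (p (Fin.last m)) (β (p k.castSucc) (p k.succ)) true true true true + Usum d β (p 0) (p k.castSucc) (p k.succ) (p (Fin.last m)) (-(β (p k.castSucc) (p k.succ))) true true false true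
        + Usum d β (p 0) (p k.castSucc) (p k.succ) (p (Fin.last m)) (-(β (p k.castSucc) (p k.succ))) true false true true + Usum d β (p 0) (p k.castSucc) (p k.succ) (p (Fin.last m)) (β (p k.castSucc) (p k.succ)) true false false true := by
    rw [sum_pair_splitB (p 0) (p k.castSucc) (p k.succ) (p (Fin.last m)) true true]
    rw [sum_quad_sigmoid β hsymm _ _ _ _ huv true true true true,
      sum_quad_sigmoid β hsymm _ _ _ _ huv true true false true,
      sum_quad_sigmoid β hsymm _ _ _ _ huv true false true true,
      sum_quad_sigmoid β hsymm _ _ _ _ huv true false false true, hr1, hr2, hr3, hr4]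
  -- flips
  have e5 : Usum d β (p 0) (p k.castSucc) (p k.succ) (p (Fin.last m)) (-(β (p k.castSucc) (p k.succ))) true true false true = Usum d β (p 0) (p k.castSucc) (p k.succ) (p (Fin.last m)) (-(β (p k.castSucc) (p k.succ))) true true true false := by
    have h := RC (-(β (p k.castSucc) (p k.succ))) true true false true
    simpa using h
  have e6 : Usum d β (p 0) (p k.castSucc) (p k.succ) (p (Fin.last m)) (-(β (p k.castSucc) (p k.succ))) true false true true = Usum d β (p 0) (p k.castSucc) (p k.succ) (p (Fin.last m)) (-(β (p k.castSucc) (p k.succ))) false true true true := by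
    have h := RD (-(β (p k.castSucc) (p k.succ))) true false true true
    simpa using h
  have e7 : Usum d β (p 0) (p k.castSucc) (p k.succ) (p (Fin.last m)) (β (p k.castSucc) (p k.succ)) true false false true = Usum d β (p 0) (p k.castSucc) (p k.succ) (p (Fin.last m)) (β (p k.castSucc) (p k.succ)) false true true false := by
    have h1 := RD (β (p k.castSucc) (p k.succ)) true false false true
    have h2 := RC (β (p k.castSucc) (p k.succ)) false true false true
    simp only [Bool.not_true, Bool.not_false] at h1 h2
    rw [h1, h2]
  rw [e5, e6, e7] at SB
  -- the zeta sums
  have hRa1 : (∑ x ∈ Finset.univ.filter (fun x : Fin d → Bool =>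
        x (p 0) = true ∧ x (p k.castSucc) = true ∧ x (p k.succ) = true ∧
          x (p (Fin.last m)) = false),
        zeta d β (p k.castSucc) (p k.succ) x)
      = Usum d β (p 0) (p k.castSucc) (p k.succ) (p (Fin.last m)) (β (p k.castSucc) (p k.succ)) true true true false - Usum d β (p 0) (p k.castSucc) (p k.succ) (p (Fin.last m)) (-(β (p k.castSucc) (p k.succ))) true true true false := by
    unfold zeta Usum
    exact Finset.sum_sub_distrib _ _
  have hRa2 : (∑ x ∈ Finset.univ.filter (fun x : Fin d → Bool =>
        x (p 0) = false ∧ x (p k.castSucc) = true ∧ x (p k.succ) = true ∧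
          x (p (Fin.last m)) = true),
        zeta d β (p k.castSucc) (p k.succ) x)
      = Usum d β (p 0) (p k.castSucc) (p k.succ) (p (Fin.last m)) (β (p k.castSucc) (p k.succ)) false true true true - Usum d β (p 0) (p k.castSucc) (p k.succ) (p (Fin.last m)) (-(β (p k.castSucc) (p k.succ))) false true true true := by
    unfold zeta Usum
    exact Finset.sum_sub_distrib _ _
  constructor
  · -- part (a)
    rw [condProbY, condProbY, hcardA, hcardB, hRa1, hRa2, SA, SB, hz2]
    push_cast
    field_simp
    ring
  · -- part (b)
    intro hodd
    -- a proper 2-coloring of the interaction graph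
    obtain ⟨τ, hτ⟩ := exists_coloring ((interGraph d β).edgeSet.ncard) (interGraph d β)
      le_rfl hacyc
    have hτprop : ∀ a b : Fin d, a ≠ b → β a b ≠ 0 → τ a ≠ τ b := fun a b h hb =>
      hτ a b (hGadjβ a b h hb)
    -- parity of the coloring along the path
    have hτstep : ∀ j : ℕ, ∀ hj : j < m + 1,
        τ (p ⟨j, hj⟩) = (if Even j then τ (p 0) else !(τ (p 0))) := by
      intro j
      induction j with
      | zero =>
        intro hj
        have h0 : (⟨0, hj⟩ : Fin (m + 1)) = 0 := by apply Fin.ext; simp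
        rw [h0, if_pos Even.zero]
      | succ j ih =>
        intro hj
        have hjlt : j < m + 1 := Nat.lt_of_succ_lt hj
        have hjm : j < m := Nat.succ_lt_succ_iff.mp hj
        have hadj := hGpadj ⟨j, hjm⟩
        have h1 : (⟨j, hjm⟩ : Fin m).castSucc = (⟨j, hjlt⟩ : Fin (m + 1)) := by
          apply Fin.ext; simp
        have h2 : (⟨j, hjm⟩ : Fin m).succ = (⟨j + 1, hj⟩ : Fin (m + 1)) := by
          apply Fin.ext; simp
        rw [h1, h2] at hadj
        have hne := hτ _ _ hadj
        have hstep : τ (p ⟨j + 1, hj⟩) = !(τ (p ⟨j, hjlt⟩)) := by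
          revert hne
          cases τ (p ⟨j + 1, hj⟩) <;> cases τ (p ⟨j, hjlt⟩) <;> simp
        rw [hstep, ih hjlt]
        by_cases hev : Even j
        · rw [if_pos hev, if_neg (by simp [Nat.even_add_one, hev])]
        · rw [if_neg hev, if_pos (by simp [Nat.even_add_one, hev]), Bool.not_not]
    have hmlt : m < m + 1 := Nat.lt_succ_self m
    have hτlast := hτstep m hmlt
    have hlaste : (⟨m, hmlt⟩ : Fin (m + 1)) = Fin.last m := by apply Fin.ext; simp
    rw [hlaste] at hτlast
    have hnotev : ¬ Even m := fun h => (Nat.not_odd_iff_even.mpr h) hodd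
    rw [if_neg hnotev] at hτlast
    -- the sum over the B-class with y = -1 equals the (+,-) class sum with y = +1
    have SB' : (∑ x ∈ Finset.univ.filter (fun x : Fin d → Bool =>
          x (p 0) = true ∧ x (p (Fin.last m)) = true), sigmoid ((-1) * fld d β x))
        = ∑ x ∈ Finset.univ.filter (fun x : Fin d → Bool =>
          x (p 0) = true ∧ x (p (Fin.last m)) = false), sigmoid (1 * fld d β x) := by
      have hfneg : ∀ x : Fin d → Bool,
          sigmoid ((-1) * fld d β x) = sigmoid (1 * fld d β (flipf τ x)) := by
        intro x
        rw [fld_flipf_neg β τ hτprop x]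
        congr 1
        ring
      by_cases hτ0 : τ (p 0) = true
      · have hτw : τ (p (Fin.last m)) = false := by rw [hτlast, hτ0]; rfl
        refine sum_flipf τ _ _ ?_ ?_ _ _ ?_
        · rintro x ⟨h1, h2⟩
          exact ⟨by rw [flipf_apply, h1, hτ0]; rfl, by rw [flipf_apply, h2, hτw]; rfl⟩
        · rintro x ⟨h1, h2⟩
          exact ⟨by rw [flipf_apply, h1, hτ0]; rfl, by rw [flipf_apply, h2, hτw]; rfl⟩
        · intro x _
          exact hfneg x
      · have hτ0' : τ (p 0) = false := by revert hτ0; cases τ (p 0) <;> simp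
        have hτw : τ (p (Fin.last m)) = true := by rw [hτlast, hτ0']; rfl
        have step1 : (∑ x ∈ Finset.univ.filter (fun x : Fin d → Bool =>
              x (p 0) = true ∧ x (p (Fin.last m)) = true), sigmoid ((-1) * fld d β x))
            = ∑ x ∈ Finset.univ.filter (fun x : Fin d → Bool =>
              x (p 0) = false ∧ x (p (Fin.last m)) = true), sigmoid (1 * fld d β x) := by
          refine sum_flipf τ _ _ ?_ ?_ _ _ ?_
          · rintro x ⟨h1, h2⟩
            exact ⟨by rw [flipf_apply, h1, hτ0']; rfl, by rw [flipf_apply, h2, hτw]; rfl⟩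
          · rintro x ⟨h1, h2⟩
            exact ⟨by rw [flipf_apply, h1, hτ0']; rfl, by rw [flipf_apply, h2, hτw]; rfl⟩
          · intro x _
            exact hfneg x
        have step2 : (∑ x ∈ Finset.univ.filter (fun x : Fin d → Bool =>
              x (p 0) = false ∧ x (p (Fin.last m)) = true), sigmoid (1 * fld d β x))
            = ∑ x ∈ Finset.univ.filter (fun x : Fin d → Bool =>
              x (p 0) = true ∧ x (p (Fin.last m)) = false), sigmoid (1 * fld d β x) := by
          refine sum_flipf (fun _ => false) _ _ ?_ ?_ _ _ ?_
          · rintro x ⟨h1, h2⟩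
            exact ⟨by rw [flipf_apply, h1]; rfl, by rw [flipf_apply, h2]; rfl⟩
          · rintro x ⟨h1, h2⟩
            exact ⟨by rw [flipf_apply, h1]; rfl, by rw [flipf_apply, h2]; rfl⟩
          · intro x _
            rw [fld_flipf_eq β (fun _ => false) (fun _ _ _ _ => rfl) x]
        rw [step1, step2]
    -- sum over the C-class
    have SC : (∑ x ∈ Finset.univ.filter (fun x : Fin d → Bool =>
          x (p 0) = true ∧ x (p (Fin.last m)) = false), sigmoid (1 * fld d β x))
        = Usum d β (p 0) (p k.castSucc) (p k.succ) (p (Fin.last m)) (β (p k.castSucc) (p k.succ)) true true true false + Usum d β (p 0) (p k.castSucc) (p k.succ) (p (Fin.last m)) (-(β (p k.castSucc) (p k.succ))) true true false false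
          + Usum d β (p 0) (p k.castSucc) (p k.succ) (p (Fin.last m)) (-(β (p k.castSucc) (p k.succ))) true false true false + Usum d β (p 0) (p k.castSucc) (p k.succ) (p (Fin.last m)) (β (p k.castSucc) (p k.succ)) true false false false := by
      rw [sum_pair_splitB (p 0) (p k.castSucc) (p k.succ) (p (Fin.last m)) true false]
      rw [sum_quad_sigmoid β hsymm _ _ _ _ huv true true true false,
        sum_quad_sigmoid β hsymm _ _ _ _ huv true true false false,
        sum_quad_sigmoid β hsymm _ _ _ _ huv true false true false,
        sum_quad_sigmoid β hsymm _ _ _ _ huv true false false false, hr1, hr2, hr3, hr4]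
    have f5 : Usum d β (p 0) (p k.castSucc) (p k.succ) (p (Fin.last m)) (-(β (p k.castSucc) (p k.succ))) true true false false = Usum d β (p 0) (p k.castSucc) (p k.succ) (p (Fin.last m)) (-(β (p k.castSucc) (p k.succ))) true true true true := by
      have h := RC (-(β (p k.castSucc) (p k.succ))) true true false false
      simpa using h
    have f6 : Usum d β (p 0) (p k.castSucc) (p k.succ) (p (Fin.last m)) (-(β (p k.castSucc) (p k.succ))) true false true false = Usum d β (p 0) (p k.castSucc) (p k.succ) (p (Fin.last m)) (-(β (p k.castSucc) (p k.succ))) false true true false := by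
      have h := RD (-(β (p k.castSucc) (p k.succ))) true false true false
      simpa using h
    have f7 : Usum d β (p 0) (p k.castSucc) (p k.succ) (p (Fin.last m)) (β (p k.castSucc) (p k.succ)) true false false false = Usum d β (p 0) (p k.castSucc) (p k.succ) (p (Fin.last m)) (β (p k.castSucc) (p k.succ)) false true true true := by
      have h1 := RD (β (p k.castSucc) (p k.succ)) true false false false
      have h2 := RC (β (p k.castSucc) (p k.succ)) false true false false
      simp only [Bool.not_true, Bool.not_false] at h1 h2
      rw [h1, h2]
    rw [f5, f6, f7] at SC
    have hRb1 : (∑ x ∈ Finset.univ.filter (fun x : Fin d → Bool =>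
          x (p 0) = true ∧ x (p k.castSucc) = true ∧ x (p k.succ) = true ∧
            x (p (Fin.last m)) = true),
          zeta d β (p k.castSucc) (p k.succ) x)
        = Usum d β (p 0) (p k.castSucc) (p k.succ) (p (Fin.last m)) (β (p k.castSucc) (p k.succ)) true true true true - Usum d β (p 0) (p k.castSucc) (p k.succ) (p (Fin.last m)) (-(β (p k.castSucc) (p k.succ))) true true true true := by
      unfold zeta Usum
      exact Finset.sum_sub_distrib _ _
    have hRb2 : (∑ x ∈ Finset.univ.filter (fun x : Fin d → Bool =>
          x (p 0) = false ∧ x (p k.castSucc) = true ∧ x (p k.succ) = true ∧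
            x (p (Fin.last m)) = false),
          zeta d β (p k.castSucc) (p k.succ) x)
        = Usum d β (p 0) (p k.castSucc) (p k.succ) (p (Fin.last m)) (β (p k.castSucc) (p k.succ)) false true true false - Usum d β (p 0) (p k.castSucc) (p k.succ) (p (Fin.last m)) (-(β (p k.castSucc) (p k.succ))) false true true false := by
      unfold zeta Usum
      exact Finset.sum_sub_distrib _ _
    rw [condProbY, condProbY, hcardA, hcardB, hRb1, hRb2, SA, SB', SC, hz2]
    push_cast
    field_simp
    ring
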